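/- Let H be a finite bipartite multigraph, given by a finite vertex set V partitioned into parts A and B, a finite edge index set E, and a map assigning to each edge an endpoint in A and an endpoint in B (parallel edges are allowed). For a vertex v, let d(v) be the number of edges incident to v. Let L assign to each edge e a finite set of colors with |L(e)| ≥ max(d(u), d(v)), where u and v are the endpoints of e. Then there is a map c choosing for each edge e a color c(e) ∈ L(e) such that any two distinct edges sharing an endpoint receive different colors. -/

import Mathlib

open Finset

set_option linter.unusedSectionVars false

section BipartiteListEdgeColoring

variable {A B E : Type*} [DecidableEq A] [DecidableEq B] [DecidableEq E]
variable (ea : E → A) (eb : E → B)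

/-- From Hall's condition, a matching in `F` saturating the B-set `Y`. -/
lemma hall_matching (F : Finset E) (Y : Finset B)
    (hall : ∀ Z ⊆ Y, Z.card ≤ (Z.biUnion (fun b => (F.filter fun f => eb f = b).image ea)).card) :
    ∃ M : Finset E, M ⊆ F ∧ M.image eb = Y ∧
      (M.image ea) ⊆ Y.biUnion (fun b => (F.filter fun f => eb f = b).image ea) ∧
      Y.card ≤ (M.image ea).card ∧
      (∀ m ∈ M, ∀ m' ∈ M, m ≠ m' → ea m ≠ ea m' ∧ eb m ≠ eb m') := by
  classical
  set N : B → Finset A := fun b => (F.filter fun f => eb f = b).image ea with hN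
  have hallT : ∀ s : Finset {x // x ∈ Y}, s.card ≤ (s.biUnion (fun x => N x.1)).card := by
    intro s
    have h1 : s.card = (s.image Subtype.val).card :=
      (card_image_of_injective s Subtype.val_injective).symm
    have h2 : s.biUnion (fun x => N x.1) = (s.image Subtype.val).biUnion N := by
      ext a; simp
    rw [h1, h2]
    refine hall _ ?_
    intro b hb
    simp only [mem_image] at hb
    obtain ⟨x, _, rfl⟩ := hb
    exact x.2
  obtain ⟨f, finj, hf⟩ :=
    (Finset.all_card_le_biUnion_card_iff_existsInjective' (fun x : {x // x ∈ Y} => N x.1)).mp hallT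
  have hex : ∀ x : {x // x ∈ Y}, ∃ e, e ∈ F ∧ eb e = x.1 ∧ ea e = f x := by
    intro x
    have := hf x
    simp only [hN, mem_image, mem_filter] at this
    obtain ⟨e, ⟨heF, hebe⟩, heae⟩ := this
    exact ⟨e, heF, hebe, heae⟩
  choose g hgF hgb hga using hex
  have ginj : Function.Injective g := by
    intro x x' h
    have : f x = f x' := by rw [← hga x, ← hga x', h]
    exact finj this
  refine ⟨Y.attach.image g, ?_, ?_, ?_, ?_, ?_⟩
  · intro m hm
    simp only [mem_image] at hm
    obtain ⟨x, _, rfl⟩ := hm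
    exact hgF x
  · ext b
    simp only [mem_image, mem_attach, true_and]
    constructor
    · rintro ⟨e, ⟨x, rfl⟩, rfl⟩
      rw [hgb x]; exact x.2
    · intro hb
      exact ⟨g ⟨b, hb⟩, ⟨⟨b, hb⟩, rfl⟩, hgb _⟩
  · intro a ha
    simp only [mem_image] at ha
    obtain ⟨e, ⟨x, _, rfl⟩, rfl⟩ := ha
    rw [mem_biUnion]
    exact ⟨x.1, x.2, by rw [hga x]; exact hf x⟩
  · have : (Y.attach.image g).image ea = Y.attach.image (fun x => f x) := by
      rw [image_image]
      exact image_congr (by intro x _; exact hga x)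
    rw [this, card_image_of_injective _ finj, card_attach]
  · intro m hm m' hm' hne
    simp only [mem_image, mem_attach, true_and] at hm hm'
    obtain ⟨x, rfl⟩ := hm
    obtain ⟨x', rfl⟩ := hm'
    have hxx : x ≠ x' := fun h => hne (by rw [h])
    constructor
    · rw [hga x, hga x']
      exact fun h => hxx (finj h)
    · rw [hgb x, hgb x']
      exact fun h => hxx (Subtype.ext h)


/-- The move lemma: a nonempty matching all of whose covered A-vertices have all their
neighbours covered, or symmetrically on the B side. -/
lemma move_lemma (F : Finset E) (hF : F.Nonempty) :
    ∃ M : Finset E, M ⊆ F ∧ M.Nonempty ∧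
      (∀ m ∈ M, ∀ m' ∈ M, m ≠ m' → ea m ≠ ea m' ∧ eb m ≠ eb m') ∧
      ((∀ f ∈ F, (∃ m ∈ M, ea m = ea f) → (∃ m ∈ M, eb m = eb f)) ∨
       (∀ f ∈ F, (∃ m ∈ M, eb m = eb f) → (∃ m ∈ M, ea m = ea f))) := by
  classical
  set N : B → Finset A := fun b => (F.filter fun f => eb f = b).image ea with hN
  set B' : Finset B := F.image eb with hB'
  by_cases hHall : ∀ Z ⊆ B', Z.card ≤ (Z.biUnion N).card
  · obtain ⟨M, hMF, hMeb, _, _, hmatch⟩ := hall_matching ea eb F B' hHall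
    refine ⟨M, hMF, ?_, hmatch, Or.inl ?_⟩
    · rw [← Finset.image_nonempty (f := eb), hMeb]
      exact hF.image eb
    · intro f hf _
      have : eb f ∈ B' := mem_image_of_mem eb hf
      rw [← hMeb] at this
      simpa only [mem_image] using this
  · push_neg at hHall
    obtain ⟨X₀, hX₀sub, hX₀⟩ := hHall
    -- minimal violator
    set S : Finset (Finset B) := B'.powerset.filter (fun Z => (Z.biUnion N).card < Z.card) with hS
    have hX₀S : X₀ ∈ S := by
      rw [hS, mem_filter, mem_powerset]; exact ⟨hX₀sub, hX₀⟩
    obtain ⟨X, hXS, hXmin⟩ := S.exists_min_image card ⟨X₀, hX₀S⟩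
    rw [hS, mem_filter, mem_powerset] at hXS
    obtain ⟨hXsub, hXviol⟩ := hXS
    -- X has at least 2 elements
    have hX1 : X.Nonempty := card_pos.mp (lt_of_le_of_lt (Nat.zero_le _) hXviol)
    obtain ⟨y₀, hy₀⟩ := hX1
    have hX2 : 1 < X.card := by
      by_contra h
      push_neg at h
      have hcard : X.card = 1 := le_antisymm h (card_pos.mpr ⟨y₀, hy₀⟩)
      obtain ⟨y, hy⟩ := card_eq_one.mp hcard
      subst hy
      have hyB' : y ∈ B' := hXsub (mem_singleton_self y)
      rw [hB', mem_image] at hyB'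
      obtain ⟨e, heF, rfl⟩ := hyB'
      have : ea e ∈ ({eb e} : Finset B).biUnion N := by
        rw [mem_biUnion]
        exact ⟨eb e, mem_singleton_self _, by rw [hN]; exact mem_image_of_mem ea (mem_filter.mpr ⟨heF, rfl⟩)⟩
      have hpos : 0 < (({eb e} : Finset B).biUnion N).card := card_pos.mpr ⟨ea e, this⟩
      rw [card_singleton] at hXviol
      omega
    set Y : Finset B := X.erase y₀ with hY
    have hYsub : Y ⊆ X := erase_subset _ _
    have hYcard : Y.card = X.card - 1 := card_erase_of_mem hy₀
    have hhallY : ∀ Z ⊆ Y, Z.card ≤ (Z.biUnion N).card := by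
      intro Z hZ
      by_contra h
      push_neg at h
      have hZS : Z ∈ S := by
        rw [hS, mem_filter, mem_powerset]
        exact ⟨(hZ.trans hYsub).trans hXsub, h⟩
      have := hXmin Z hZS
      have hZcard : Z.card ≤ Y.card := card_le_card hZ
      omega
    obtain ⟨M, hMF, hMeb, hMea_sub, hMea_card, hmatch⟩ := hall_matching ea eb F Y hhallY
    have hYne : Y.Nonempty := by
      rw [← card_pos, hYcard]; omega
    -- M.image ea = X.biUnion N
    have hsub2 : M.image ea ⊆ X.biUnion N :=
      hMea_sub.trans (biUnion_subset_biUnion_of_subset_left N hYsub)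
    have hcard2 : (X.biUnion N).card ≤ (M.image ea).card := by
      have := hMea_card
      omega
    have hEq : M.image ea = X.biUnion N := eq_of_subset_of_card_le hsub2 hcard2
    refine ⟨M, hMF, ?_, hmatch, Or.inr ?_⟩
    · rw [← Finset.image_nonempty (f := eb), hMeb]; exact hYne
    · intro f hfF hcovb
      obtain ⟨m, hm, hmeb⟩ := hcovb
      have hfb : eb f ∈ X := by
        have : eb m ∈ Y := by rw [← hMeb]; exact mem_image_of_mem eb hm
        rw [← hmeb]; exact hYsub this
      have : ea f ∈ X.biUnion N := by
        rw [mem_biUnion]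
        exact ⟨eb f, hfb, by rw [hN]; exact mem_image_of_mem ea (mem_filter.mpr ⟨hfF, rfl⟩)⟩
      rw [← hEq, mem_image] at this
      obtain ⟨m', hm', hma⟩ := this
      exact ⟨m', hm', hma⟩

def degA (F : Finset E) (e : E) : ℕ := (F.filter fun f => ea f = ea e).card

lemma degA_congr {F : Finset E} {f g : E} (h : ea f = ea g) : degA ea F f = degA ea F g := by
  unfold degA; rw [h]

lemma degA_pos {F : Finset E} {f : E} (hf : f ∈ F) : 0 < degA ea F f :=
  card_pos.mpr ⟨f, mem_filter.mpr ⟨hf, rfl⟩⟩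

lemma degA_split {F M : Finset E} (hMF : M ⊆ F)
    (hmatch : ∀ m ∈ M, ∀ m' ∈ M, m ≠ m' → ea m ≠ ea m') (f : E) :
    degA ea F f = degA ea (F \ M) f + (if ∃ m ∈ M, ea m = ea f then 1 else 0) := by
  classical
  have hsub : M.filter (fun m => ea m = ea f) ⊆ F.filter (fun m => ea m = ea f) :=
    filter_subset_filter _ hMF
  have hsdiff : (F \ M).filter (fun m => ea m = ea f)
      = F.filter (fun m => ea m = ea f) \ M.filter (fun m => ea m = ea f) := by
    ext x; simp only [mem_filter, mem_sdiff]; tauto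
  have hcard : (M.filter fun m => ea m = ea f).card = if ∃ m ∈ M, ea m = ea f then 1 else 0 := by
    split_ifs with h
    · obtain ⟨m₀, hm₀, hm₀e⟩ := h
      rw [card_eq_one]
      refine ⟨m₀, ?_⟩
      ext m
      simp only [mem_filter, mem_singleton]
      constructor
      · rintro ⟨hm, hme⟩
        by_contra hne
        exact hmatch m hm m₀ hm₀ hne (hme.trans hm₀e.symm)
      · rintro rfl; exact ⟨hm₀, hm₀e⟩
    · push_neg at h
      rw [card_eq_zero, filter_eq_empty_iff]
      exact h
  unfold degA
  rw [hsdiff, card_sdiff_of_subset hsub, hcard]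
  have := card_le_card hsub
  omega


/-- Extension step of the rank construction, "type A" move. -/
lemma extend_ranks {F M : Finset E} (hMF : M ⊆ F)
    (hmatch : ∀ m ∈ M, ∀ m' ∈ M, m ≠ m' → ea m ≠ ea m' ∧ eb m ≠ eb m')
    (htype : ∀ f ∈ F, (∃ m ∈ M, ea m = ea f) → (∃ m ∈ M, eb m = eb f))
    (p' q' : E → ℕ)
    (h1 : ∀ f ∈ F \ M, ∀ g ∈ F \ M, f ≠ g → ea f = ea g → p' f ≠ p' g)
    (h2 : ∀ f ∈ F \ M, ∀ g ∈ F \ M, f ≠ g → eb f = eb g → q' f ≠ q' g)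
    (h3 : ∀ f ∈ F \ M, p' f < degA ea (F \ M) f)
    (h4 : ∀ f ∈ F \ M, q' f < degA eb (F \ M) f)
    (h5 : ∀ f ∈ F \ M, p' f + q' f + 1 ≤ max (degA ea (F \ M) f) (degA eb (F \ M) f)) :
    ∃ p q : E → ℕ,
      (∀ f ∈ F, ∀ g ∈ F, f ≠ g → ea f = ea g → p f ≠ p g) ∧
      (∀ f ∈ F, ∀ g ∈ F, f ≠ g → eb f = eb g → q f ≠ q g) ∧
      (∀ f ∈ F, p f < degA ea F f) ∧
      (∀ f ∈ F, q f < degA eb F f) ∧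
      (∀ f ∈ F, p f + q f + 1 ≤ max (degA ea F f) (degA eb F f)) := by
  classical
  set p : E → ℕ := fun f => if f ∈ M then 0
    else p' f + (if ∃ m ∈ M, ea m = ea f then 1 else 0) with hp
  set q : E → ℕ := fun f => if f ∈ M then degA eb F f - 1 else q' f with hq
  have hsplitA : ∀ f : E, degA ea F f = degA ea (F \ M) f + (if ∃ m ∈ M, ea m = ea f then 1 else 0) :=
    degA_split ea hMF (fun m hm m' hm' hne => (hmatch m hm m' hm' hne).1)
  have hsplitB : ∀ f : E, degA eb F f = degA eb (F \ M) f + (if ∃ m ∈ M, eb m = eb f then 1 else 0) :=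
    degA_split eb hMF (fun m hm m' hm' hne => (hmatch m hm m' hm' hne).2)
  have hmemF' : ∀ f ∈ F, f ∉ M → f ∈ F \ M := fun f hf hfM => mem_sdiff.mpr ⟨hf, hfM⟩
  refine ⟨p, q, ?_, ?_, ?_, ?_, ?_⟩
  · -- p injective on A-stars
    intro f hf g hg hne hee
    by_cases hfM : f ∈ M <;> by_cases hgM : g ∈ M
    · exact absurd hee (hmatch f hfM g hgM hne).1
    · have hgF' := hmemF' g hg hgM
      have hcg : ∃ m ∈ M, ea m = ea g := ⟨f, hfM, hee⟩
      simp only [hp, if_pos hfM, if_neg hgM, if_pos hcg]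
      omega
    · have hcf : ∃ m ∈ M, ea m = ea f := ⟨g, hgM, hee.symm⟩
      simp only [hp, if_pos hgM, if_neg hfM, if_pos hcf]
      omega
    · have hfF' := hmemF' f hf hfM
      have hgF' := hmemF' g hg hgM
      have hiff : (∃ m ∈ M, ea m = ea f) ↔ (∃ m ∈ M, ea m = ea g) := by rw [hee]
      simp only [hp, if_neg hfM, if_neg hgM]
      by_cases hc : ∃ m ∈ M, ea m = ea f
      · rw [if_pos hc, if_pos (hiff.mp hc)]
        have := h1 f hfF' g hgF' hne hee
        omega
      · rw [if_neg hc, if_neg (fun h => hc (hiff.mpr h))]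
        exact h1 f hfF' g hgF' hne hee
  · -- q injective on B-stars
    intro f hf g hg hne hee
    by_cases hfM : f ∈ M <;> by_cases hgM : g ∈ M
    · exact absurd hee (hmatch f hfM g hgM hne).2
    · have hgF' := hmemF' g hg hgM
      have hcg : ∃ m ∈ M, eb m = eb g := ⟨f, hfM, hee⟩
      have hdg : degA eb F g = degA eb (F \ M) g + 1 := by
        rw [hsplitB g, if_pos hcg]
      have hqg : q' g < degA eb (F \ M) g := h4 g hgF'
      have hdfg : degA eb F f = degA eb F g := degA_congr eb hee
      simp only [hq, if_pos hfM, if_neg hgM]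
      omega
    · have hfF' := hmemF' f hf hfM
      have hcf : ∃ m ∈ M, eb m = eb f := ⟨g, hgM, hee.symm⟩
      have hdf : degA eb F f = degA eb (F \ M) f + 1 := by
        rw [hsplitB f, if_pos hcf]
      have hqf : q' f < degA eb (F \ M) f := h4 f hfF'
      have hdfg : degA eb F f = degA eb F g := degA_congr eb hee
      simp only [hq, if_pos hgM, if_neg hfM]
      omega
    · simp only [hq, if_neg hfM, if_neg hgM]
      exact h2 f (hmemF' f hf hfM) g (hmemF' g hg hgM) hne hee
  · -- p < degA
    intro f hf
    by_cases hfM : f ∈ M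
    · simp only [hp, if_pos hfM]
      exact degA_pos ea hf
    · have hfF' := hmemF' f hf hfM
      have := h3 f hfF'
      have hd := hsplitA f
      simp only [hp, if_neg hfM]
      split_ifs at hd ⊢ <;> omega
  · -- q < degB
    intro f hf
    by_cases hfM : f ∈ M
    · simp only [hq, if_pos hfM]
      have := degA_pos eb hf
      omega
    · have hfF' := hmemF' f hf hfM
      have := h4 f hfF'
      have hd := hsplitB f
      simp only [hq, if_neg hfM]
      split_ifs at hd <;> omega
  · -- sum bound
    intro f hf
    by_cases hfM : f ∈ M
    · simp only [hp, hq, if_pos hfM]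
      have h1 := degA_pos eb hf
      have : degA eb F f ≤ max (degA ea F f) (degA eb F f) := le_max_right _ _
      omega
    · have hfF' := hmemF' f hf hfM
      have hsum := h5 f hfF'
      have hdA := hsplitA f
      have hdB := hsplitB f
      simp only [hp, hq, if_neg hfM]
      by_cases hc : ∃ m ∈ M, ea m = ea f
      · have hcb : ∃ m ∈ M, eb m = eb f := htype f hf hc
        rw [if_pos hc] at hdA ⊢
        rw [if_pos hcb] at hdB
        rcases max_cases (degA ea (F \ M) f) (degA eb (F \ M) f) with ⟨hmx, _⟩ | ⟨hmx, _⟩ <;>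
        rcases max_cases (degA ea F f) (degA eb F f) with ⟨hmx2, _⟩ | ⟨hmx2, _⟩ <;> omega
      · rw [if_neg hc] at hdA ⊢
        have : (if ∃ m ∈ M, eb m = eb f then 1 else 0) ≤ 1 := by split_ifs <;> omega
        rcases max_cases (degA ea (F \ M) f) (degA eb (F \ M) f) with ⟨hmx, _⟩ | ⟨hmx, _⟩ <;>
        rcases max_cases (degA ea F f) (degA eb F f) with ⟨hmx2, _⟩ | ⟨hmx2, _⟩ <;> omega

lemma ranks_lemma (F : Finset E) :
    ∃ p q : E → ℕ,
      (∀ f ∈ F, ∀ g ∈ F, f ≠ g → ea f = ea g → p f ≠ p g) ∧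
      (∀ f ∈ F, ∀ g ∈ F, f ≠ g → eb f = eb g → q f ≠ q g) ∧
      (∀ f ∈ F, p f < degA ea F f) ∧
      (∀ f ∈ F, q f < degA eb F f) ∧
      (∀ f ∈ F, p f + q f + 1 ≤ max (degA ea F f) (degA eb F f)) := by
  classical
  induction F using Finset.strongInduction with
  | _ F ih =>
    rcases F.eq_empty_or_nonempty with rfl | hF
    · exact ⟨fun _ => 0, fun _ => 0, by simp, by simp, by simp, by simp, by simp⟩
    · obtain ⟨M, hMF, hMne, hmatch, htype⟩ := move_lemma ea eb F hF
      have hss : F \ M ⊂ F := by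
        obtain ⟨m, hm⟩ := hMne
        refine Finset.ssubset_iff_of_subset (sdiff_subset) |>.mpr ?_
        exact ⟨m, hMF hm, by simp [hm]⟩
      obtain ⟨p', q', h1, h2, h3, h4, h5⟩ := ih (F \ M) hss
      rcases htype with htA | htB
      · exact extend_ranks ea eb hMF hmatch htA p' q' h1 h2 h3 h4 h5
      · obtain ⟨q, p, k2, k1, k4, k3, k5⟩ :=
          extend_ranks eb ea hMF (fun m hm m' hm' hne => (hmatch m hm m' hm' hne).symm) htB
            q' p' h2 h1 h4 h3 (fun f hf => by rw [max_comm, Nat.add_comm (q' f) (p' f)]; exact h5 f hf)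
        exact ⟨p, q, k1, k2, k3, k4, fun f hf => by rw [max_comm, Nat.add_comm (p f) (q f)]; exact k5 f hf⟩

lemma kernel_lemma (p q : E → ℕ) (F : Finset E)
    (hp : ∀ f ∈ F, ∀ g ∈ F, f ≠ g → ea f = ea g → p f ≠ p g)
    (hq : ∀ f ∈ F, ∀ g ∈ F, f ≠ g → eb f = eb g → q f ≠ q g) :
    ∃ K : Finset E, K ⊆ F ∧
      (∀ k ∈ K, ∀ k' ∈ K, k ≠ k' → ea k ≠ ea k' ∧ eb k ≠ eb k') ∧
      (∀ e ∈ F, e ∉ K → ∃ k ∈ K, (ea k = ea e ∧ p k < p e) ∨ (eb k = eb e ∧ q k < q e)) := by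
  classical
  induction F using Finset.strongInduction with
  | _ F ih =>
  by_cases hcase : ∃ e ∈ F, (∀ f ∈ F, ea f = ea e → p e ≤ p f) ∧
      ∃ g ∈ F, g ≠ e ∧ eb g = eb e ∧ q e < q g
  · obtain ⟨e, heF, htop, g, hgF, hgne, hgb, hqlt⟩ := hcase
    have hss : F.erase g ⊂ F := erase_ssubset hgF
    have hpe : ∀ f ∈ F.erase g, ∀ f' ∈ F.erase g, f ≠ f' → ea f = ea f' → p f ≠ p f' :=
      fun f hf f' hf' => hp f (mem_of_mem_erase hf) f' (mem_of_mem_erase hf')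
    have hqe : ∀ f ∈ F.erase g, ∀ f' ∈ F.erase g, f ≠ f' → eb f = eb f' → q f ≠ q f' :=
      fun f hf f' hf' => hq f (mem_of_mem_erase hf) f' (mem_of_mem_erase hf')
    obtain ⟨K, hKF, hKind, hKabs⟩ := ih (F.erase g) hss hpe hqe
    have hKsub : K ⊆ F := hKF.trans (erase_subset _ _)
    have heg : e ≠ g := fun h => by rw [h] at hqlt; omega
    have heF' : e ∈ F.erase g := mem_erase.mpr ⟨heg, heF⟩
    have habs_e : ∃ h ∈ K, eb h = eb e ∧ q h ≤ q e := by
      by_cases heK : e ∈ K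
      · exact ⟨e, heK, rfl, le_refl _⟩
      · obtain ⟨k, hkK, hk⟩ := hKabs e heF' heK
        rcases hk with ⟨hka, hklt⟩ | ⟨hkb, hklt⟩
        · exact absurd hklt (not_lt.mpr (htop k (hKsub hkK) hka))
        · exact ⟨k, hkK, hkb, le_of_lt hklt⟩
    obtain ⟨h, hhK, hhb, hhq⟩ := habs_e
    refine ⟨K, hKsub, hKind, ?_⟩
    intro f hfF hfK
    by_cases hfg : f = g
    · subst hfg
      exact ⟨h, hhK, Or.inr ⟨hhb.trans hgb.symm, lt_of_le_of_lt hhq hqlt⟩⟩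
    · exact hKabs f (mem_erase.mpr ⟨hfg, hfF⟩) hfK
  · push_neg at hcase
    set K : Finset E := F.filter (fun e => ∀ f ∈ F, ea f = ea e → p e ≤ p f) with hK
    have hKsub : K ⊆ F := filter_subset _ _
    refine ⟨K, hKsub, ?_, ?_⟩
    · intro k hk k' hk' hne
      rw [hK, mem_filter] at hk hk'
      constructor
      · intro hee
        have h1 := hk.2 k' hk'.1 hee.symm
        have h2 := hk'.2 k hk.1 hee
        exact hp k hk.1 k' hk'.1 hne hee (le_antisymm h1 h2)
      · intro hee
        have h1 := hcase k hk.1 hk.2 k' hk'.1 hne.symm hee.symm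
        have h2 := hcase k' hk'.1 hk'.2 k hk.1 hne hee
        exact hq k hk.1 k' hk'.1 hne hee (le_antisymm h2 h1)
    · intro e heF heK
      obtain ⟨k, hkT, hkmin⟩ :=
        (F.filter (fun f => ea f = ea e)).exists_min_image p
          ⟨e, mem_filter.mpr ⟨heF, rfl⟩⟩
      rw [mem_filter] at hkT
      have hkK : k ∈ K := by
        rw [hK, mem_filter]
        refine ⟨hkT.1, ?_⟩
        intro f hf hfa
        exact hkmin f (mem_filter.mpr ⟨hf, hfa.trans hkT.2⟩)
      have hkne : k ≠ e := fun h => heK (h ▸ hkK)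
      have hkle : p k ≤ p e := hkmin e (mem_filter.mpr ⟨heF, rfl⟩)
      have : p k ≠ p e := hp k hkT.1 e heF hkne hkT.2
      exact ⟨k, hkK, Or.inl ⟨hkT.2, lt_of_le_of_ne hkle this⟩⟩

def outdeg (p q : E → ℕ) (F : Finset E) (e : E) : ℕ :=
  (F.filter fun f => f ≠ e ∧ ((ea f = ea e ∧ p f < p e) ∨ (eb f = eb e ∧ q f < q e))).card


lemma coloring_lemma (p q : E → ℕ)
    (hp : ∀ f g : E, f ≠ g → ea f = ea g → p f ≠ p g)
    (hq : ∀ f g : E, f ≠ g → eb f = eb g → q f ≠ q g)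
    (F : Finset E) :
    ∀ L : E → Finset ℕ, (∀ e ∈ F, outdeg ea eb p q F e < (L e).card) →
    ∃ c : E → ℕ, (∀ e ∈ F, c e ∈ L e) ∧
      (∀ e ∈ F, ∀ f ∈ F, e ≠ f → (ea e = ea f ∨ eb e = eb f) → c e ≠ c f) := by
  classical
  induction F using Finset.strongInduction with
  | _ F ih =>
  intro L hL
  rcases F.eq_empty_or_nonempty with rfl | hF
  · exact ⟨fun _ => 0, by simp, by simp⟩
  obtain ⟨e₀, he₀⟩ := hF
  have hLne : (L e₀).Nonempty := card_pos.mp (lt_of_le_of_lt (Nat.zero_le _) (hL e₀ he₀))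
  obtain ⟨α, hα⟩ := hLne
  set Fα : Finset E := F.filter (fun e => α ∈ L e) with hFα
  have he₀α : e₀ ∈ Fα := mem_filter.mpr ⟨he₀, hα⟩
  obtain ⟨K, hKF, hKind, hKabs⟩ := kernel_lemma ea eb p q Fα
    (fun f hf g hg => hp f g) (fun f hf g hg => hq f g)
  have hKsubF : K ⊆ F := hKF.trans (filter_subset _ _)
  have hKne : K.Nonempty := by
    by_cases h : e₀ ∈ K
    · exact ⟨e₀, h⟩
    · obtain ⟨k, hk, _⟩ := hKabs e₀ he₀α h
      exact ⟨k, hk⟩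
  have hss : F \ K ⊂ F := by
    obtain ⟨k, hk⟩ := hKne
    exact Finset.ssubset_iff_of_subset sdiff_subset |>.mpr ⟨k, hKsubF hk, by simp [hk]⟩
  set L' : E → Finset ℕ := fun e => (L e).erase α with hL'
  have hinv : ∀ e ∈ F \ K, outdeg ea eb p q (F \ K) e < (L' e).card := by
    intro e he
    rw [mem_sdiff] at he
    obtain ⟨heF, heK⟩ := he
    have hmono : ∀ (G G' : Finset E), G' ⊆ G →
        (G'.filter fun f => f ≠ e ∧ ((ea f = ea e ∧ p f < p e) ∨ (eb f = eb e ∧ q f < q e)))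
        ⊆ (G.filter fun f => f ≠ e ∧ ((ea f = ea e ∧ p f < p e) ∨ (eb f = eb e ∧ q f < q e))) :=
      fun G G' hsub => filter_subset_filter _ hsub
    by_cases heα : e ∈ Fα
    · obtain ⟨k, hkK, hkrel⟩ := hKabs e heα heK
      have hkne : k ≠ e := fun h => heK (h ▸ hkK)
      have hkmem : k ∈ F.filter fun f => f ≠ e ∧
          ((ea f = ea e ∧ p f < p e) ∨ (eb f = eb e ∧ q f < q e)) :=
        mem_filter.mpr ⟨hKsubF hkK, hkne, hkrel⟩
      have hsub2 : ((F \ K).filter fun f => f ≠ e ∧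
          ((ea f = ea e ∧ p f < p e) ∨ (eb f = eb e ∧ q f < q e)))
          ⊆ (F.filter fun f => f ≠ e ∧
          ((ea f = ea e ∧ p f < p e) ∨ (eb f = eb e ∧ q f < q e))).erase k := by
        intro x hx
        rw [mem_filter, mem_sdiff] at hx
        refine mem_erase.mpr ⟨fun h => hx.1.2 (h ▸ hkK), mem_filter.mpr ⟨hx.1.1, hx.2⟩⟩
      have hcard1 : outdeg ea eb p q (F \ K) e ≤ outdeg ea eb p q F e - 1 := by
        have := card_le_card hsub2
        rw [card_erase_of_mem hkmem] at this
        exact this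
      have hαe : α ∈ L e := (mem_filter.mp heα).2
      have hcardL : (L' e).card = (L e).card - 1 := by
        show ((L e).erase α).card = (L e).card - 1
        exact card_erase_of_mem hαe
      have h1 := hL e heF
      have h2 : 1 ≤ (L e).card := card_pos.mpr ⟨α, hαe⟩
      have h3 : 1 ≤ outdeg ea eb p q F e := by
        unfold outdeg; exact card_pos.mpr ⟨k, hkmem⟩
      omega
    · have hαe : α ∉ L e := fun h => heα (mem_filter.mpr ⟨heF, h⟩)
      have hcardL : (L' e).card = (L e).card := by
        show ((L e).erase α).card = (L e).card
        rw [erase_eq_of_notMem hαe]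
      have hcard1 : outdeg ea eb p q (F \ K) e ≤ outdeg ea eb p q F e :=
        card_le_card (hmono F (F \ K) sdiff_subset)
      have := hL e heF
      omega
  obtain ⟨c', hc'mem, hc'prop⟩ := ih (F \ K) hss L' hinv
  set c : E → ℕ := fun e => if e ∈ K then α else c' e with hc
  have hcK : ∀ e ∈ K, c e = α := fun e he => by simp [hc, he]
  have hcnK : ∀ e, e ∉ K → c e = c' e := fun e he => by simp [hc, he]
  have hneqα : ∀ f ∈ F, f ∉ K → c f ≠ α := by
    intro f hf hfK
    rw [hcnK f hfK]
    have := hc'mem f (mem_sdiff.mpr ⟨hf, hfK⟩)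
    have : c' f ∈ (L f).erase α := this
    exact fun h => (notMem_erase α (L f)) (h ▸ this)
  refine ⟨c, ?_, ?_⟩
  · intro e he
    by_cases heK : e ∈ K
    · rw [hcK e heK]
      exact (mem_filter.mp (hKF heK)).2
    · rw [hcnK e heK]
      exact (erase_subset α (L e)) (hc'mem e (mem_sdiff.mpr ⟨he, heK⟩))
  · intro e he f hf hne hshare
    by_cases heK : e ∈ K <;> by_cases hfK : f ∈ K
    · rcases hshare with h | h
      · exact absurd h (hKind e heK f hfK hne).1
      · exact absurd h (hKind e heK f hfK hne).2
    · rw [hcK e heK]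
      exact fun h => hneqα f hf hfK h.symm
    · rw [hcK f hfK]
      exact hneqα e he heK
    · rw [hcnK e heK, hcnK f hfK]
      exact hc'prop e (mem_sdiff.mpr ⟨he, heK⟩) f (mem_sdiff.mpr ⟨hf, hfK⟩) hne hshare

end BipartiteListEdgeColoring


theorem statement8 (A B E : Type*) [Fintype A] [Fintype B] [Fintype E]
    (ea : E → A) (eb : E → B) (L : E → Finset ℕ)
    (hL : ∀ e : E,
      max {e' : E | ea e' = ea e}.ncard {e' : E | eb e' = eb e}.ncard ≤ (L e).card) :
    ∃ c : E → ℕ, (∀ e, c e ∈ L e) ∧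
      ∀ e e' : E, e ≠ e' → (ea e = ea e' ∨ eb e = eb e') → c e ≠ c e' := by
  classical
  have hncA : ∀ e : E, {e' : E | ea e' = ea e}.ncard = degA ea univ e := by
    intro e
    have h : {e' : E | ea e' = ea e} = ↑(univ.filter fun f => ea f = ea e) := by
      ext x; simp
    rw [h, Set.ncard_coe_finset]
    rfl
  have hncB : ∀ e : E, {e' : E | eb e' = eb e}.ncard = degA eb univ e := by
    intro e
    have h : {e' : E | eb e' = eb e} = ↑(univ.filter fun f => eb f = eb e) := by
      ext x; simp
    rw [h, Set.ncard_coe_finset]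
    rfl
  obtain ⟨p, q, hp, hq, _, _, hsum⟩ := ranks_lemma ea eb (univ : Finset E)
  have hp' : ∀ f g : E, f ≠ g → ea f = ea g → p f ≠ p g :=
    fun f g => hp f (mem_univ f) g (mem_univ g)
  have hq' : ∀ f g : E, f ≠ g → eb f = eb g → q f ≠ q g :=
    fun f g => hq f (mem_univ f) g (mem_univ g)
  have houtdeg : ∀ e : E, outdeg ea eb p q univ e ≤ p e + q e := by
    intro e
    have hsplit : (univ.filter fun f => f ≠ e ∧
        ((ea f = ea e ∧ p f < p e) ∨ (eb f = eb e ∧ q f < q e)))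
        ⊆ (univ.filter fun f => f ≠ e ∧ ea f = ea e ∧ p f < p e)
          ∪ (univ.filter fun f => f ≠ e ∧ eb f = eb e ∧ q f < q e) := by
      intro x hx
      simp only [mem_filter, mem_union, mem_univ, true_and] at hx ⊢
      tauto
    have h1 : (univ.filter fun f => f ≠ e ∧ ea f = ea e ∧ p f < p e).card ≤ p e := by
      have := Finset.card_le_card_of_injOn p
        (s := univ.filter fun f => f ≠ e ∧ ea f = ea e ∧ p f < p e)
        (t := Finset.range (p e))
        (by intro x hx
            simp only [coe_filter, mem_filter, mem_univ, true_and, Set.mem_setOf_eq] at hx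
            exact mem_coe.mpr (mem_range.mpr hx.2.2))
        (by intro x hx y hy hxy
            simp only [coe_filter, mem_univ, true_and, Set.mem_setOf_eq] at hx hy
            by_contra hne
            exact hp' x y hne (hx.2.1.trans hy.2.1.symm) hxy)
      simpa using this
    have h2 : (univ.filter fun f => f ≠ e ∧ eb f = eb e ∧ q f < q e).card ≤ q e := by
      have := Finset.card_le_card_of_injOn q
        (s := univ.filter fun f => f ≠ e ∧ eb f = eb e ∧ q f < q e)
        (t := Finset.range (q e))
        (by intro x hx
            simp only [coe_filter, mem_filter, mem_univ, true_and, Set.mem_setOf_eq] at hx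
            exact mem_coe.mpr (mem_range.mpr hx.2.2))
        (by intro x hx y hy hxy
            simp only [coe_filter, mem_univ, true_and, Set.mem_setOf_eq] at hx hy
            by_contra hne
            exact hq' x y hne (hx.2.1.trans hy.2.1.symm) hxy)
      simpa using this
    calc outdeg ea eb p q univ e
        ≤ ((univ.filter fun f => f ≠ e ∧ ea f = ea e ∧ p f < p e)
          ∪ (univ.filter fun f => f ≠ e ∧ eb f = eb e ∧ q f < q e)).card :=
          card_le_card hsplit
      _ ≤ _ + _ := card_union_le _ _
      _ ≤ p e + q e := Nat.add_le_add h1 h2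
  have hLout : ∀ e ∈ (univ : Finset E), outdeg ea eb p q univ e < (L e).card := by
    intro e _
    have h1 := hsum e (mem_univ e)
    have h2 := hL e
    rw [hncA e, hncB e] at h2
    have := houtdeg e
    omega
  obtain ⟨c, hcmem, hcprop⟩ := coloring_lemma ea eb p q hp' hq' univ L hLout
  exact ⟨c, fun e => hcmem e (mem_univ e),
    fun e e' hne hsh => hcprop e (mem_univ e) e' (mem_univ e') hne hsh⟩
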